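/- If X is an indecomposable finite cycle set with more than one element such that the permutation group 𝒢(X) is abelian, then X is retractable, i.e. there exist distinct elements x, y ∈ X with φ_x = φ_y. -/

import Mathlib

/-- An indecomposable finite cycle set with more than one element whose
permutation group is abelian is retractable. -/
theorem stmt_3 {X : Type*} [Fintype X]
    (φ : X → Equiv.Perm X)
    (hcs : ∀ x y z : X, φ (φ x y) (φ x z) = φ (φ y x) (φ y z))
    (hcard : 1 < Fintype.card X)
    (htrans : ∀ y z : X, ∃ g ∈ Subgroup.closure (Set.range φ), g y = z)
    (hab : ∀ g ∈ Subgroup.closure (Set.range φ),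
      ∀ h ∈ Subgroup.closure (Set.range φ), g * h = h * g) :
    ∃ a b : X, a ≠ b ∧ φ a = φ b := by
  classical
  by_contra hcon
  push_neg at hcon
  have hinj : Function.Injective φ := by
    intro a b h
    by_contra hne
    exact (hcon a b hne) h
  set G := Subgroup.closure (Set.range φ) with hG
  -- The action of G is free.
  have hfree : ∀ g ∈ G, ∀ x : X, g x = x → g = 1 := by
    intro g hg x hx
    ext y
    obtain ⟨h, hh, hhx⟩ := htrans x y
    have hcomm : (g * h) x = (h * g) x := by rw [hab g hg h hh]
    simp only [Equiv.Perm.mul_apply, hx] at hcomm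
    calc g y = g (h x) := by rw [hhx]
      _ = h x := hcomm
      _ = y := hhx
  obtain ⟨x0⟩ : Nonempty X := Fintype.card_pos_iff.mp (by omega)
  haveI : Fintype ↥G := Fintype.ofFinite _
  -- evaluation at x0 is injective on G
  have heval : Function.Injective (fun g : G => (g : Equiv.Perm X) x0) := by
    intro g g' h
    have hmem : ((g' : Equiv.Perm X)⁻¹ * g) ∈ G := mul_mem (inv_mem g'.2) g.2
    have hfix0 : ((g' : Equiv.Perm X)⁻¹ * g) x0 = x0 := by
      simp only [Equiv.Perm.mul_apply] at h ⊢
      rw [h, Equiv.Perm.inv_def, Equiv.symm_apply_apply]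
    have h1 := hfree _ hmem x0 hfix0
    exact Subtype.ext (by
      simpa [mul_assoc] using congrArg (fun p => (g' : Equiv.Perm X) * p) h1)
  -- φ as a map into G
  have hφmem : ∀ x : X, φ x ∈ G := fun x =>
    Subgroup.subset_closure (Set.mem_range_self x)
  have hι : Function.Injective (fun x : X => (⟨φ x, hφmem x⟩ : G)) := by
    intro a b h
    exact hinj (congrArg Subtype.val h)
  have hcard1 : Fintype.card X ≤ Fintype.card G := Fintype.card_le_of_injective _ hι
  have hcard2 : Fintype.card G ≤ Fintype.card X := Fintype.card_le_of_injective _ heval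
  have hbij : Function.Bijective (fun x : X => (⟨φ x, hφmem x⟩ : G)) :=
    (Fintype.bijective_iff_injective_and_card _).mpr ⟨hι, le_antisymm hcard1 hcard2⟩
  obtain ⟨x1, hx1⟩ := hbij.2 ⟨1, one_mem G⟩
  have hφ1 : φ x1 = 1 := congrArg Subtype.val hx1
  -- x1 is fixed by every φ y
  have hfix : ∀ y : X, φ y x1 = x1 := by
    intro y
    have h1 : ∀ z : X, φ y z = φ (φ y x1) (φ y z) := by
      intro z
      have := hcs x1 y z
      rw [hφ1] at this
      simpa using this
    have h2 : φ (φ y x1) = 1 := by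
      ext w
      have := h1 ((φ y)⁻¹ w)
      simpa using this.symm
    apply hinj
    rw [h2, hφ1]
  -- hence x1 is fixed by all of G
  have hstab : ∀ g ∈ G, g x1 = x1 := by
    intro g hg
    have hle : G ≤ MulAction.stabilizer (Equiv.Perm X) x1 := by
      rw [hG, Subgroup.closure_le]
      rintro p ⟨y, rfl⟩
      simpa [MulAction.mem_stabilizer_iff] using hfix y
    exact hle hg
  -- contradiction with transitivity and |X| > 1
  obtain ⟨z, hz⟩ := Fintype.exists_ne_of_one_lt_card hcard x1
  obtain ⟨g, hg, hgz⟩ := htrans x1 z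
  exact hz (hgz ▸ (hstab g hg).symm ▸ rfl)
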